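/- Let g be a game on a finite graph and a a player whose preference is automatic-piecewise prefix-linear in g. Then player a has the optimality-is-regular property in g: for every finite-memory strategy s_a of a there is a deterministic finite automaton, reading histories as words over the vertex set, that accepts exactly the histories at which s_a is optimal. -/

import Mathlib

namespace GG

variable {V C A : Type}

/-- Append a finite list in front of an infinite sequence. -/
def appSeq (l : List V) (ρ : ℕ → V) : ℕ → V :=
  fun n => if n < l.length then l.getD n (ρ 0) else ρ (n - l.length)

/-- Glue two histories, identifying the last vertex of `l` with the first of `l'`. -/
def glueL (l l' : List V) : List V := l.dropLast ++ l'

/-- Glue a history with a run, identifying the last vertex of `l` with the start of `ρ`. -/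
def glueR (l : List V) (ρ : ℕ → V) : ℕ → V := appSeq l.dropLast ρ

/-- Ultimately periodic (regular) sequence. -/
def UltPeriodic (ρ : ℕ → V) : Prop := ∃ k p : ℕ, 0 < p ∧ ∀ n, k ≤ n → ρ (n + p) = ρ n

/-- Strict weak order: irreflexive, transitive, with transitive incomparability. -/
def SWO (r : (ℕ → C) → (ℕ → C) → Prop) : Prop :=
  (∀ x, ¬ r x x) ∧ (∀ x y z, r x y → r y z → r x z) ∧
    (∀ x y z, ¬ r x y → ¬ r y z → ¬ r x z)

/-- A strategy uses `m` bits of memory: it is induced by a strategic update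
`σ : V × {0,1}^m → V × {0,1}^m` together with an initial memory content. -/
def UsesMem (m : ℕ) (s : List V → V) : Prop :=
  ∃ (σ : V × (Fin m → Bool) → V × (Fin m → Bool)) (M₀ : Fin m → Bool),
    ∀ (l : List V) (v : V),
      s (l ++ [v]) = (σ (v, l.foldl (fun M u => (σ (u, M)).2) M₀)).1

/-- A finite-memory strategy. -/
def FinMem (s : List V → V) : Prop := ∃ m, UsesMem m s

/-- Regular language: recognized by a deterministic finite automaton. -/
def RegLang {α : Type} (L : Set (List α)) : Prop :=
  ∃ (Q : Type) (_ : Fintype Q) (step : Q → α → Q) (init : Q) (acc : Set Q),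
    ∀ w : List α, w ∈ L ↔ w.foldl step init ∈ acc

/-- Repeat a finite word `n` times. -/
def repW (l : List C) (n : ℕ) : List C := (List.replicate n l).flatten

/-- The infinite word `u · w^ω` (with default letter `d`, unused when `w ≠ []`). -/
def extWord (d : C) (u w : List C) : ℕ → C := fun n =>
  if n < u.length then u.getD n d else w.getD ((n - u.length) % w.length) d

/-- The regular-Mont condition for a preference on infinite color sequences. -/
def RegularMont (prec : (ℕ → C) → (ℕ → C) → Prop) : Prop :=
  ∀ (d : C) (h₀ h₁ h₂ h₃ : List C), h₁ ≠ [] → h₃ ≠ [] →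
    (∀ n : ℕ, prec (extWord d (h₀ ++ repW h₁ n ++ h₂) h₃)
        (extWord d (h₀ ++ repW h₁ (n + 1) ++ h₂) h₃)) →
    prec (extWord d (h₀ ++ h₂) h₃) (extWord d h₀ h₁)

/-- The weak optimality-is-regular property of a preference. -/
def WeakOIR (prec : (ℕ → C) → (ℕ → C) → Prop) : Prop :=
  ∀ p q : ℕ → C, UltPeriodic p → UltPeriodic q →
    ∃ M : Set (List C), RegLang M ∧ ∀ h : List C, h ∈ M ↔ prec (appSeq h p) (appSeq h q)

/-- Automatic-piecewise prefix-linearity of a preference on `C^ω` (word level). -/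
def APPLword (prec : (ℕ → C) → (ℕ → C) → Prop) : Prop :=
  ∃ (Q : Type) (_ : Fintype Q) (step : Q → C → Q) (init : Q),
    ∀ h h' : List C, h.foldl step init = h'.foldl step init →
      ∀ p q : ℕ → C,
        (prec (appSeq h p) (appSeq h q) ↔ prec (appSeq h' p) (appSeq h' q))

/-- A multi-player game played on a finite directed graph in which every
vertex has an outgoing edge. Players compare runs via color traces. -/
structure Game (V C A : Type) where
  edge : V → V → Prop
  serial : ∀ v, ∃ w, edge v w
  start : V
  owner : V → A
  color : V → C
  pref : A → (ℕ → C) → (ℕ → C) → Prop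

/-- Shifted strategy `s^h`. -/
def shiftStrat (l : List V) (s : List V → V) : List V → V :=
  fun l' => s (l.dropLast ++ l')

namespace Game

variable (g : Game V C A)

def lastV (l : List V) : V := l.getLast?.getD g.start

/-- Histories: finite paths starting at the start vertex. -/
def IsHist (l : List V) : Prop :=
  l ≠ [] ∧ l.head? = some g.start ∧ l.Chain' g.edge

/-- Runs: infinite paths starting at the start vertex. -/
def IsRun (ρ : ℕ → V) : Prop :=
  ρ 0 = g.start ∧ ∀ n, g.edge (ρ n) (ρ (n + 1))

/-- Runs are compared via their color traces. -/
def runPref (a : A) (ρ ρ' : ℕ → V) : Prop :=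
  g.pref a (fun n => g.color (ρ n)) (fun n => g.color (ρ' n))

/-- Validity of a strategy on the set `P` of controlled vertices. -/
def ValidOn (P : V → Prop) (s : List V → V) : Prop :=
  ∀ l, g.IsHist l → P (g.lastV l) → g.edge (g.lastV l) (s l)

def ValidStrat (a : A) (s : List V → V) : Prop :=
  g.ValidOn (fun v => g.owner v = a) s

/-- Validity for the coalition of all players other than `a`. -/
def ValidCo (a : A) (s : List V → V) : Prop :=
  g.ValidOn (fun v => g.owner v ≠ a) s

def _root_.GG.histUpTo (ρ : ℕ → V) (n : ℕ) : List V := (List.range (n + 1)).map ρ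

def _root_.GG.CompatOn (P : V → Prop) (s : List V → V) (ρ : ℕ → V) : Prop :=
  ∀ n, P (ρ n) → ρ (n + 1) = s (GG.histUpTo ρ n)

/-- A run is compatible with a strategy of player `a`. -/
def Compat (a : A) (s : List V → V) (ρ : ℕ → V) : Prop :=
  GG.CompatOn (fun v => g.owner v = a) s ρ

def CompatCo (a : A) (s : List V → V) (ρ : ℕ → V) : Prop :=
  GG.CompatOn (fun v => g.owner v ≠ a) s ρ

/-- `s` is a winning strategy of Player 1 (= player `a`) in the threshold game
`g_{a,ρ}`: every compatible run is strictly preferred to `ρ`. -/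
def Wins1 (a : A) (ρ : ℕ → V) (s : List V → V) : Prop :=
  g.ValidStrat a s ∧ ∀ ρ', g.IsRun ρ' → g.Compat a s ρ' → g.runPref a ρ ρ'

/-- `s` is a winning strategy of Player 2 (the coalition) in the threshold game `g_{a,ρ}`. -/
def Wins2 (a : A) (ρ : ℕ → V) (s : List V → V) : Prop :=
  g.ValidCo a s ∧ ∀ ρ', g.IsRun ρ' → g.CompatCo a s ρ' → ¬ g.runPref a ρ ρ'

/-- Player 1 wins the non-strict threshold game for `a` and `ρ` with `s`. -/
def Wins1NS (a : A) (ρ : ℕ → V) (s : List V → V) : Prop :=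
  g.ValidStrat a s ∧ ∀ ρ', g.IsRun ρ' → g.Compat a s ρ' → ¬ g.runPref a ρ' ρ

/-- Player 2 wins the non-strict threshold game for `a` and `ρ` with `s`. -/
def Wins2NS (a : A) (ρ : ℕ → V) (s : List V → V) : Prop :=
  g.ValidCo a s ∧ ∀ ρ', g.IsRun ρ' → g.CompatCo a s ρ' → g.runPref a ρ' ρ

/-- The future game `g^h` after history `l`. -/
def future (l : List V) : Game V C A where
  edge := g.edge
  serial := g.serial
  start := g.lastV l
  owner := g.owner
  color := g.color
  pref := fun a p q =>
    g.pref a (appSeq (l.dropLast.map g.color) p) (appSeq (l.dropLast.map g.color) q)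

/-- The guarantee `γ_a(s)` of a strategy. -/
def gam (a : A) (s : List V → V) : Set (ℕ → V) :=
  {ρ | g.IsRun ρ ∧ ∃ ρ', g.IsRun ρ' ∧ g.Compat a s ρ' ∧ ¬ g.runPref a ρ ρ'}

/-- The best guarantee `Γ_a`. -/
def Gam (a : A) : Set (ℕ → V) :=
  ⋂ s ∈ {s : List V → V | g.ValidStrat a s}, g.gam a s

def Optimal (a : A) (s : List V → V) : Prop := g.gam a s = g.Gam a

def OptimalAt (a : A) (s : List V → V) (l : List V) : Prop :=
  (g.future l).Optimal a (shiftStrat l s)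

def SubgameOptimal (a : A) (s : List V → V) : Prop :=
  ∀ l, g.IsHist l → g.OptimalAt a s l

/-- A history is compatible with a strategy of player `a`. -/
def HistCompat (a : A) (s : List V → V) (l : List V) : Prop :=
  ∀ i : ℕ, i + 1 < l.length → g.owner (l.getD i g.start) = a →
    l.getD (i + 1) g.start = s (l.take (i + 1))

def ConsistentOptimal (a : A) (s : List V → V) : Prop :=
  ∀ l, g.IsHist l → g.HistCompat a s l → g.OptimalAt a s l

/-- The history of the play induced by a strategy profile, up to stage `n`. -/
def playHist (prof : A → List V → V) : ℕ → List V
  | 0 => [g.start]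
  | n + 1 =>
      playHist prof n ++
        [prof (g.owner (g.lastV (playHist prof n))) (playHist prof n)]

/-- The run induced by a strategy profile. -/
def play (prof : A → List V → V) : ℕ → V := fun n => g.lastV (g.playHist prof n)

/-- Nash equilibrium. -/
def IsNash [DecidableEq A] (prof : A → List V → V) : Prop :=
  (∀ a, g.ValidStrat a (prof a)) ∧
    ∀ a s', g.ValidStrat a s' →
      ¬ g.runPref a (g.play prof) (g.play (Function.update prof a s'))

/-- Optimality of the strategy `s` of player `a` is regular using `D` bits. -/
def OptRegBits (a : A) (s : List V → V) (D : ℕ) : Prop :=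
  ∃ (Q : Type) (_ : Fintype Q) (step : Q → V → Q) (init : Q) (acc : Set Q),
    Fintype.card Q ≤ 2 ^ D ∧
      ∀ l, g.IsHist l → (l.foldl step init ∈ acc ↔ g.OptimalAt a s l)

/-- Player `a` has the optimality-is-regular property in `g`. -/
def OIR (a : A) : Prop :=
  ∀ s, g.ValidStrat a s → FinMem s →
    ∃ (Q : Type) (_ : Fintype Q) (step : Q → V → Q) (init : Q) (acc : Set Q),
      ∀ l, g.IsHist l → (l.foldl step init ∈ acc ↔ g.OptimalAt a s l)

/-- The two-player antagonistic game associated to player `a`: Player `true`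
controls `V_a` with preference `≺_a`, Player `false` the remaining vertices
with the inverse preference. -/
def anta [DecidableEq A] (a : A) : Game V C Bool where
  edge := g.edge
  serial := g.serial
  start := g.start
  owner := fun v => decide (g.owner v = a)
  color := g.color
  pref := fun p x y => if p = true then g.pref a x y else g.pref a y x

/-- The cumulative glued histories `h₀⌢h₁⌢…⌢h_n`. -/
def _root_.GG.cumul (h₀ : List V) (hs : ℕ → List V) : ℕ → List V
  | 0 => h₀
  | n + 1 => glueL (GG.cumul h₀ hs n) (hs n)

/-- The preference of player `a` is Mont in `g`. -/
def MontPref (a : A) : Prop :=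
  ∀ (h₀ : List V) (ρ : ℕ → V) (hs : ℕ → List V),
    g.IsHist h₀ → UltPeriodic ρ →
    (∀ n, g.IsRun (glueR (GG.cumul h₀ hs n) ρ)) →
    (∀ n, g.runPref a (glueR (GG.cumul h₀ hs n) ρ) (glueR (GG.cumul h₀ hs (n + 1)) ρ)) →
    ∀ lim : ℕ → V,
      (∀ n k, k < (GG.cumul h₀ hs n).dropLast.length →
        lim k = (GG.cumul h₀ hs n).dropLast.getD k g.start) →
      (∀ N, ∃ n, N < (GG.cumul h₀ hs n).dropLast.length) →
      g.runPref a (glueR h₀ ρ) lim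

/-- Player `a`'s preference is automatic-piecewise prefix-linear in `g`. -/
def APPLin (a : A) : Prop :=
  ∃ (Q : Type) (_ : Fintype Q) (step : Q → V → Q) (init : Q),
    ∀ h h', g.IsHist h → g.IsHist h' →
      h.foldl step init = h'.foldl step init →
      g.lastV h = g.lastV h' ∧
        ∀ ρ ρ' : ℕ → V,
          g.IsRun (glueR h ρ) → g.IsRun (glueR h ρ') →
          g.IsRun (glueR h' ρ) → g.IsRun (glueR h' ρ') →
          (g.runPref a (glueR h ρ) (glueR h ρ') ↔ g.runPref a (glueR h' ρ) (glueR h' ρ'))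

end Game

end GG

open GG

section Helpers

variable {V C A : Type}

lemma appSeq_map (f : V → C) (l : List V) (ρ : ℕ → V) :
    (fun n => f (appSeq l ρ n)) = appSeq (l.map f) (f ∘ ρ) := by
  funext n
  simp only [appSeq, List.length_map, Function.comp]
  by_cases h : n < l.length
  · have h2 : n < (l.map f).length := by simpa using h
    rw [if_pos h, if_pos h, List.getD_eq_getElem _ _ h,
      List.getD_eq_getElem _ _ h2, List.getElem_map]
  · rw [if_neg h, if_neg h]

lemma lastV_eq_getElem (g : Game V C A) (h : List V) (hne : h ≠ []) :
    g.lastV h = h[h.length - 1]'(by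
      have := List.length_pos_iff.2 hne; omega) := by
  rw [Game.lastV, List.getLast?_eq_getLast_of_ne_nil hne, Option.getD_some,
    List.getLast_eq_getElem]

lemma glue_run (g : Game V C A) (h : List V) (ρ : ℕ → V)
    (hh : g.IsHist h) (hρ : (g.future h).IsRun ρ) : g.IsRun (glueR h ρ) := by
  obtain ⟨hne, hhead, hchain⟩ := hh
  obtain ⟨h0, hedge⟩ := hρ
  have hpos : 0 < h.length := List.length_pos_iff.2 hne
  have hk : h.dropLast.length = h.length - 1 := List.length_dropLast
  have hlast : ρ 0 = h[h.length - 1]'(by omega) := by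
    rw [h0]; exact lastV_eq_getElem g h hne
  have hchain' := List.isChain_iff_getElem.1 hchain
  constructor
  · show appSeq h.dropLast ρ 0 = g.start
    have hhd : h[0] = g.start := by
      have : h.head? = some h[0] := by
        cases h with
        | nil => exact absurd rfl hne
        | cons x t => rfl
      rw [this] at hhead; exact Option.some.inj hhead
    by_cases hc : 0 < h.dropLast.length
    · rw [appSeq, if_pos hc, List.getD_eq_getElem _ _ hc, List.getElem_dropLast, hhd]
    · rw [appSeq, if_neg hc]
      simp only [Nat.zero_sub]
      have hl1 : h.length = 1 := by omega
      rw [hlast]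
      have : h.length - 1 = 0 := by omega
      simp only [this, hhd]
  · intro n
    show g.edge (appSeq h.dropLast ρ n) (appSeq h.dropLast ρ (n + 1))
    by_cases h1 : n + 1 < h.dropLast.length
    · rw [appSeq, appSeq, if_pos h1, if_pos (by omega),
        List.getD_eq_getElem _ _ h1, List.getD_eq_getElem _ _ (by omega : n < h.dropLast.length),
        List.getElem_dropLast, List.getElem_dropLast]
      have := hchain' n (by omega)
      simpa using this
    · by_cases h2 : n < h.dropLast.length
      · -- n + 1 = h.dropLast.length
        have heq : n + 1 = h.dropLast.length := by omega
        rw [appSeq, appSeq, if_pos h2, if_neg h1, List.getD_eq_getElem _ _ h2,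
          List.getElem_dropLast, heq, Nat.sub_self, hlast]
        have := hchain' n (by omega)
        have hidx : h.length - 1 = n + 1 := by omega
        simp only [hidx]
        simpa using this
      · rw [appSeq, appSeq, if_neg h2, if_neg (by omega)]
        have : n + 1 - h.dropLast.length = (n - h.dropLast.length) + 1 := by omega
        rw [this]
        exact hedge _

lemma runPref_glue (g : Game V C A) (a : A) (h : List V) (ρ ρ' : ℕ → V) :
    (g.future h).runPref a ρ ρ' ↔ g.runPref a (glueR h ρ) (glueR h ρ') := by
  show g.pref a (appSeq (h.dropLast.map g.color) (fun n => g.color (ρ n)))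
      (appSeq (h.dropLast.map g.color) (fun n => g.color (ρ' n))) ↔
    g.pref a (fun n => g.color (appSeq h.dropLast ρ n))
      (fun n => g.color (appSeq h.dropLast ρ' n))
  rw [appSeq_map g.color h.dropLast ρ, appSeq_map g.color h.dropLast ρ']
  rfl

lemma optimal_transfer (g : Game V C A) (a : A) (h h' : List V)
    (hh : g.IsHist h) (hh' : g.IsHist h')
    (hlast : g.lastV h = g.lastV h')
    (hpref : ∀ ρ ρ' : ℕ → V, g.IsRun (glueR h ρ) → g.IsRun (glueR h ρ') →
      g.IsRun (glueR h' ρ) → g.IsRun (glueR h' ρ') →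
      (g.runPref a (glueR h ρ) (glueR h ρ') ↔ g.runPref a (glueR h' ρ) (glueR h' ρ')))
    (t t' : List V → V) (hts : ∀ l, l ≠ [] → t l = t' l) :
    ((g.future h).Optimal a t ↔ (g.future h').Optimal a t') := by
  have hrun : ∀ ρ, (g.future h).IsRun ρ ↔ (g.future h').IsRun ρ := by
    intro ρ
    show (ρ 0 = g.lastV h ∧ _) ↔ (ρ 0 = g.lastV h' ∧ _)
    rw [hlast]
    exact Iff.rfl
  have hprefeq : ∀ ρ ρ' : ℕ → V, (g.future h).IsRun ρ → (g.future h).IsRun ρ' →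
      ((g.future h).runPref a ρ ρ' ↔ (g.future h').runPref a ρ ρ') := by
    intro ρ ρ' hρ hρ'
    rw [runPref_glue, runPref_glue]
    exact hpref ρ ρ' (glue_run g h ρ hh hρ) (glue_run g h ρ' hh hρ')
      (glue_run g h' ρ hh' ((hrun ρ).1 hρ)) (glue_run g h' ρ' hh' ((hrun ρ').1 hρ'))
  have hgam : ∀ u u' : List V → V, (∀ l, l ≠ [] → u l = u' l) →
      (g.future h).gam a u = (g.future h').gam a u' := by
    intro u u' huu
    have hcompat : ∀ ρ, (g.future h).Compat a u ρ ↔ (g.future h').Compat a u' ρ := by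
      intro ρ
      constructor <;> intro hc n hn <;>
        [rw [← huu (GG.histUpTo ρ n) (by simp [GG.histUpTo, List.range_succ])];
         rw [huu (GG.histUpTo ρ n) (by simp [GG.histUpTo, List.range_succ])] ] <;>
        exact hc n hn
    ext ρ
    show ((g.future h).IsRun ρ ∧ _) ↔ ((g.future h').IsRun ρ ∧ _)
    constructor
    · rintro ⟨h1, ρ', h2, h3, h4⟩
      exact ⟨(hrun ρ).1 h1, ρ', (hrun ρ').1 h2, (hcompat ρ').1 h3,
        fun hp => h4 ((hprefeq ρ ρ' h1 h2).2 hp)⟩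
    · rintro ⟨h1, ρ', h2, h3, h4⟩
      exact ⟨(hrun ρ).2 h1, ρ', (hrun ρ').2 h2, (hcompat ρ').2 h3,
        fun hp => h4 ((hprefeq ρ ρ' ((hrun ρ).2 h1) ((hrun ρ').2 h2)).1 hp)⟩
  have hhist : ∀ l, (g.future h).IsHist l ↔ (g.future h').IsHist l := by
    intro l
    show (l ≠ [] ∧ l.head? = some (g.lastV h) ∧ _) ↔ (l ≠ [] ∧ l.head? = some (g.lastV h') ∧ _)
    rw [hlast]
    exact Iff.rfl
  have hlastV : ∀ l : List V, l ≠ [] → (g.future h).lastV l = (g.future h').lastV l := by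
    intro l hl
    show l.getLast?.getD (g.lastV h) = l.getLast?.getD (g.lastV h')
    rw [List.getLast?_eq_getLast_of_ne_nil hl]
    rfl
  have hvalid : ∀ u : List V → V, (g.future h).ValidStrat a u ↔ (g.future h').ValidStrat a u := by
    intro u
    constructor <;> intro hv l hl ho
    · have hl' := (hhist l).2 hl
      have hne : l ≠ [] := hl'.1
      rw [← hlastV l hne] at ho ⊢
      exact hv l hl' ho
    · have hne : l ≠ [] := hl.1
      rw [hlastV l hne] at ho ⊢
      exact hv l ((hhist l).1 hl) ho
  have hGam : (g.future h).Gam a = (g.future h').Gam a := by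
    ext ρ
    simp only [Game.Gam, Set.mem_iInter, Set.mem_setOf_eq]
    constructor <;> intro hI u hu
    · rw [← hgam u u (fun _ _ => rfl)]
      exact hI u ((hvalid u).2 hu)
    · rw [hgam u u (fun _ _ => rfl)]
      exact hI u ((hvalid u).1 hu)
  show ((g.future h).gam a t = (g.future h).Gam a) ↔
    ((g.future h').gam a t' = (g.future h').Gam a)
  rw [hgam t t' hts, hGam]

end Helpers


/-- Proposition 5.1: automatic-piecewise prefix-linear preferences have the
optimality-is-regular property. -/
theorem stmt13
    {V C A : Type} [Fintype V]
    (g : GG.Game V C A)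
    (hswo : ∀ b, GG.SWO (g.pref b))
    (a : A) (happl : g.APPLin a) :
    g.OIR a := by
  obtain ⟨Q, hQfin, step, init, hQ⟩ := happl
  intro s _hvalid ⟨m, σ, M₀, hσ⟩
  haveI := hQfin
  set upd : (Fin m → Bool) → V → (Fin m → Bool) := fun M u => (σ (u, M)).2 with hupd
  let Q' := Q × ((Fin m → Bool) × (Fin m → Bool))
  let step' : Q' → V → Q' := fun p v => (step p.1 v, (upd p.2.1 v, p.2.1))
  let init' : Q' := (init, (M₀, M₀))
  have hfold : ∀ l : List V, l.foldl step' init' =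
      (l.foldl step init, (l.foldl upd M₀, l.dropLast.foldl upd M₀)) := by
    intro l
    induction l using List.reverseRecOn with
    | nil => rfl
    | append_singleton l v ih =>
      simp only [List.foldl_append, List.foldl_cons, List.foldl_nil, ih,
        List.dropLast_concat, step']
  -- key: same automaton state implies same optimality
  have hkey : ∀ l l' : List V, g.IsHist l → g.IsHist l' →
      l.foldl step' init' = l'.foldl step' init' →
      (g.OptimalAt a s l ↔ g.OptimalAt a s l') := by
    intro l l' hl hl' hst
    rw [hfold, hfold] at hst
    have h1 : l.foldl step init = l'.foldl step init := congrArg Prod.fst hst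
    have hMd : l.dropLast.foldl upd M₀ = l'.dropLast.foldl upd M₀ :=
      congrArg (fun p => p.2.2) hst
    obtain ⟨hlast, hpref⟩ := hQ l l' hl hl' h1
    have hts : ∀ w : List V, w ≠ [] → shiftStrat l s w = shiftStrat l' s w := by
      intro w hw
      rcases List.eq_nil_or_concat w with hnil | ⟨u, v, huv⟩
      · exact absurd hnil hw
      subst huv
      show s (l.dropLast ++ u.concat v) = s (l'.dropLast ++ u.concat v)
      rw [List.concat_eq_append, ← List.append_assoc, ← List.append_assoc, hσ, hσ,
        List.foldl_append, List.foldl_append, hMd]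
    exact optimal_transfer g a l l' hl hl' hlast hpref _ _ hts
  refine ⟨Q', inferInstance, step', init',
    {q | ∃ l, g.IsHist l ∧ l.foldl step' init' = q ∧ g.OptimalAt a s l}, ?_⟩
  intro l hl
  constructor
  · rintro ⟨l', hl', hst, hopt⟩
    exact (hkey l l' hl hl' hst.symm).2 hopt
  · intro hopt
    exact ⟨l, hl, rfl, hopt⟩
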